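/- Assume in addition c₀ ∈ H³(a,b), and let (w⁰, c⁰) be a classical solution of the radial chemotaxis system with parameter ε = 0 on [a,b]×[0,T] with initial data (w₀, c₀) satisfying the compatibility conditions. (i) If w⁰(a,t) > 0 for some t ∈ [0,T], then there exists t₁ ∈ [0,T] such that E_a(t₁) ≠ 0 and w⁰(a,t₁) > 0. (ii) If w⁰(b,t) > 0 for some t ∈ [0,T], then there exists t₂ ∈ [0,T] such that E_b(t₂) ≠ 0 and w⁰(b,t₂) > 0. -/

import Mathlib

noncomputable section

/-- Partial derivative in the first (spatial) variable. -/
def dr (f : ℝ → ℝ → ℝ) : ℝ → ℝ → ℝ := fun r t => deriv (fun s => f s t) r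

/-- Partial derivative in the second (time) variable. -/
def dt (f : ℝ → ℝ → ℝ) : ℝ → ℝ → ℝ := fun r t => deriv (fun s => f r s) t

/-- Squared L² norm on (a,b). -/
def L2Sq (a b : ℝ) (f : ℝ → ℝ) : ℝ := ∫ r in a..b, (f r) ^ 2

/-- Squared Hᵐ norm on (a,b). -/
def HSq (a b : ℝ) (m : ℕ) (f : ℝ → ℝ) : ℝ :=
  ∑ k ∈ Finset.range (m + 1), L2Sq a b (iteratedDeriv k f)

/-- Hᵐ norm on (a,b). -/
def Hnorm (a b : ℝ) (m : ℕ) (f : ℝ → ℝ) : ℝ := Real.sqrt (HSq a b m f)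

/-- Sup norm on [a,b] (the C[a,b] norm). -/
def CSup (a b : ℝ) (f : ℝ → ℝ) : ℝ := sSup ((fun r => |f r|) '' Set.Icc a b)

/-- Supremum over t ∈ (0,T]. -/
def supT (T : ℝ) (g : ℝ → ℝ) : ℝ := sSup (g '' Set.Ioc 0 T)

/-- Hypotheses on the initial data: Sobolev regularity (Hᵐ membership encoded as
`ContDiffOn` of the corresponding order on [a,b]), sign conditions, and the
compatibility conditions. -/
structure InitData (a b lam κ : ℝ) (mw mc : ℕ) (w₀ c₀ : ℝ → ℝ) : Prop where
  regw : ContDiffOn ℝ mw w₀ (Set.Icc a b)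
  regc : ContDiffOn ℝ mc c₀ (Set.Icc a b)
  w0_nonneg : ∀ r ∈ Set.Icc a b, 0 ≤ w₀ r
  c0_pos : ∀ r ∈ Set.Icc a b, 0 < c₀ r
  compat_wa : deriv w₀ a - w₀ a * deriv c₀ a = 0
  compat_wb : deriv w₀ b - w₀ b * deriv c₀ b = 0
  compat_ca : deriv c₀ a = -κ * (lam - c₀ a)
  compat_cb : deriv c₀ b = κ * (lam - c₀ b)

/-- A classical solution of the radial chemotaxis system with parameter ε on
[a,b]×[0,T]: continuity on the closed rectangle, enough smoothness up to the
lateral boundary for all derivatives appearing in the equations and estimates,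
the equations pointwise, the initial, no-flux and (when ε > 0) Robin boundary
conditions, and the sign conditions w ≥ 0, c > 0. -/
structure IsClassicalSolution (a b T : ℝ) (n : ℕ) (lam κ ε : ℝ)
    (w₀ c₀ : ℝ → ℝ) (w c : ℝ → ℝ → ℝ) : Prop where
  cont_w : ContinuousOn (Function.uncurry w) (Set.Icc a b ×ˢ Set.Icc 0 T)
  cont_c : ContinuousOn (Function.uncurry c) (Set.Icc a b ×ˢ Set.Icc 0 T)
  smooth_w_space : ∀ t ∈ Set.Ioc (0:ℝ) T, ContDiffOn ℝ 3 (fun r => w r t) (Set.Icc a b)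
  smooth_c_space : ∀ t ∈ Set.Ioc (0:ℝ) T, ContDiffOn ℝ 3 (fun r => c r t) (Set.Icc a b)
  smooth_wt_space : ∀ t ∈ Set.Ioc (0:ℝ) T, ContDiffOn ℝ 1 (fun r => dt w r t) (Set.Icc a b)
  smooth_ct_space : ∀ t ∈ Set.Ioc (0:ℝ) T, ContDiffOn ℝ 1 (fun r => dt c r t) (Set.Icc a b)
  diff_w_time : ∀ r ∈ Set.Icc a b, ∀ t ∈ Set.Ioc (0:ℝ) T, DifferentiableAt ℝ (fun s => w r s) t
  diff_c_time : ∀ r ∈ Set.Icc a b, ∀ t ∈ Set.Ioc (0:ℝ) T, DifferentiableAt ℝ (fun s => c r s) t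
  eq_w : ∀ r ∈ Set.Ioo a b, ∀ t ∈ Set.Ioc (0:ℝ) T,
    dt w r t = dr (dr w) r t + ((n : ℝ) - 1) / r * dr w r t
      - dr (fun s τ => w s τ * dr c s τ) r t - ((n : ℝ) - 1) / r * (w r t * dr c r t)
  eq_c : ∀ r ∈ Set.Ioo a b, ∀ t ∈ Set.Ioc (0:ℝ) T,
    dt c r t = ε * dr (dr c) r t + ε * (((n : ℝ) - 1) / r) * dr c r t - w r t * c r t
  init_w : ∀ r ∈ Set.Icc a b, w r 0 = w₀ r
  init_c : ∀ r ∈ Set.Icc a b, c r 0 = c₀ r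
  bc_w : ∀ t ∈ Set.Ioc (0:ℝ) T,
    dr w a t - w a t * dr c a t = 0 ∧ dr w b t - w b t * dr c b t = 0
  bc_c : 0 < ε → ∀ t ∈ Set.Ioc (0:ℝ) T,
    dr c a t = -κ * (lam - c a t) ∧ dr c b t = κ * (lam - c b t)
  w_nonneg : ∀ r ∈ Set.Ioo a b, ∀ t ∈ Set.Ioc (0:ℝ) T, 0 ≤ w r t
  c_pos : ∀ r ∈ Set.Ioo a b, ∀ t ∈ Set.Ioc (0:ℝ) T, 0 < c r t

/-- The boundary quantity E_x(t) (for x = a or x = b). -/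
def Efun (lam : ℝ) (c₀ : ℝ → ℝ) (x : ℝ) (w c : ℝ → ℝ → ℝ) (t : ℝ) : ℝ :=
  c₀ x * Real.exp (-(∫ τ in (0:ℝ)..t, w x τ)) *
      (1 - Real.exp (-(∫ τ in (0:ℝ)..t, w x τ * c x τ)))
    - lam * (1 - Real.exp (-(∫ τ in (0:ℝ)..t, w x τ * (c x τ + 1))))



open Set Real MeasureTheory Filter Topology in
/-- Auxiliary: the one-variable function controlling the boundary quantity. -/
def gfun17 (C0 lam : ℝ) (x : ℝ) : ℝ :=
  C0 * Real.exp (-x) * (1 - Real.exp (-(C0 * (1 - Real.exp (-x)))))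
    - lam * (1 - Real.exp (-(x + C0 * (1 - Real.exp (-x)))))

lemma gfun17_analytic (C0 lam : ℝ) : AnalyticOnNhd ℝ (gfun17 C0 lam) Set.univ := by
  intro x _
  have hid : AnalyticAt ℝ (fun x : ℝ => x) x := analyticAt_id
  have he : AnalyticAt ℝ (fun x : ℝ => Real.exp (-x)) x := AnalyticAt.rexp hid.neg
  have h1 : AnalyticAt ℝ (fun x : ℝ => C0 * (1 - Real.exp (-x))) x :=
    analyticAt_const.mul (analyticAt_const.sub he)
  have h2 : AnalyticAt ℝ (fun x : ℝ => Real.exp (-(C0 * (1 - Real.exp (-x))))) x :=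
    AnalyticAt.rexp h1.neg
  have h3 : AnalyticAt ℝ (fun x : ℝ => Real.exp (-(x + C0 * (1 - Real.exp (-x))))) x :=
    AnalyticAt.rexp (hid.add h1).neg
  exact ((analyticAt_const.mul he).mul (analyticAt_const.sub h2)).sub
    (analyticAt_const.mul (analyticAt_const.sub h3))

lemma gfun17_neg_at (C0 lam : ℝ) (hC0 : 0 < C0) (hlam : 0 < lam) :
    ∃ X : ℝ, gfun17 C0 lam X < 0 := by
  set X : ℝ := max 1 (Real.log ((C0 + lam) / lam) + 1) with hXdef
  refine ⟨X, ?_⟩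
  have hX1 : (1:ℝ) ≤ X := le_max_left _ _
  have hXpos : 0 < X := lt_of_lt_of_le one_pos hX1
  have hfrac : 0 < lam / (C0 + lam) := div_pos hlam (by linarith)
  have hkey : Real.exp (-X) < lam / (C0 + lam) := by
    rw [← Real.lt_log_iff_exp_lt hfrac]
    have h1 : Real.log (lam / (C0 + lam)) = -Real.log ((C0 + lam) / lam) := by
      rw [Real.log_div hlam.ne' (by positivity), Real.log_div (by positivity) hlam.ne']
      ring
    have := le_max_right 1 (Real.log ((C0 + lam) / lam) + 1)
    rw [h1]; linarith
  set e := Real.exp (-X) with he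
  have hepos : 0 < e := Real.exp_pos _
  have he1 : e < 1 := by
    rw [he, Real.exp_lt_one_iff]; linarith
  set P := C0 * (1 - e) with hP
  have hPpos : 0 < P := mul_pos hC0 (by linarith)
  have hexpP : 0 < Real.exp (-P) := Real.exp_pos _
  have hexpP1 : Real.exp (-P) < 1 := by rw [Real.exp_lt_one_iff]; linarith
  have h2 : Real.exp (-(X + P)) ≤ e := by
    rw [he]; exact Real.exp_le_exp.mpr (by linarith)
  have hkey2 : (C0 + lam) * e < lam := by
    have h := (lt_div_iff₀ (show (0:ℝ) < C0 + lam by linarith)).mp hkey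
    nlinarith [h]
  have t1 : C0 * e * (1 - Real.exp (-P)) < C0 * e := by nlinarith [mul_pos hC0 hepos]
  have t2 : lam * (1 - e) ≤ lam * (1 - Real.exp (-(X + P))) := by nlinarith
  show C0 * e * (1 - Real.exp (-P)) - lam * (1 - Real.exp (-(X + P))) < 0
  nlinarith

open Set Real MeasureTheory Filter Topology in
lemma gfun17_isolated (C0 lam : ℝ) (hC0 : 0 < C0) (hlam : 0 < lam) (x₀ : ℝ) :
    ∃ η > 0, ∀ z : ℝ, |z - x₀| < η → z ≠ x₀ →
      C0 * Real.exp (-z) * (1 - Real.exp (-(C0 * (1 - Real.exp (-z)))))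
        - lam * (1 - Real.exp (-(z + C0 * (1 - Real.exp (-z))))) ≠ 0 := by
  rcases (gfun17_analytic C0 lam x₀ (Set.mem_univ _)).eventually_eq_zero_or_eventually_ne_zero
    with h | h
  · exfalso
    obtain ⟨X, hX⟩ := gfun17_neg_at C0 lam hC0 hlam
    have := (gfun17_analytic C0 lam).eqOn_zero_of_preconnected_of_eventuallyEq_zero
      isPreconnected_univ (Set.mem_univ x₀) h (Set.mem_univ X)
    simp only [Pi.zero_apply] at this
    exact absurd this (ne_of_lt hX)
  · rw [eventually_nhdsWithin_iff] at h
    rw [Metric.eventually_nhds_iff] at h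
    obtain ⟨η, hη, hb⟩ := h
    refine ⟨η, hη, fun z hz hne => ?_⟩
    have := hb (by simpa [Real.dist_eq] using hz) (by simpa using hne)
    simpa [gfun17] using this

open Set Real MeasureTheory Filter Topology in
lemma boundary_main17 (T lam C0 : ℝ) (hT : 0 < T) (hlam : 0 < lam) (hC0 : 0 < C0)
    (W Cc : ℝ → ℝ)
    (hW : ContinuousOn W (Set.Icc 0 T)) (hCcont : ContinuousOn Cc (Set.Icc 0 T))
    (hCc0 : Cc 0 = C0)
    (hode : ∀ t ∈ Set.Ioc (0:ℝ) T, HasDerivAt Cc (-(W t * Cc t)) t)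
    (hpos : ∃ t ∈ Set.Icc (0:ℝ) T, 0 < W t) :
    ∃ t₁ ∈ Set.Icc (0:ℝ) T,
      (C0 * Real.exp (-(∫ τ in (0:ℝ)..t₁, W τ)) *
          (1 - Real.exp (-(∫ τ in (0:ℝ)..t₁, W τ * Cc τ)))
        - lam * (1 - Real.exp (-(∫ τ in (0:ℝ)..t₁, W τ * (Cc τ + 1)))) ≠ 0) ∧ 0 < W t₁ := by
  have huIcc : Set.uIcc (0:ℝ) T = Set.Icc 0 T := Set.uIcc_of_le hT.le
  have hsubint : ∀ F : ℝ → ℝ, ContinuousOn F (Set.Icc 0 T) → ∀ s ∈ Set.Icc (0:ℝ) T,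
      ∀ t ∈ Set.Icc (0:ℝ) T, IntervalIntegrable F volume s t := by
    intro F hF s hs t ht
    apply ContinuousOn.intervalIntegrable
    apply hF.mono
    rw [← huIcc]
    exact Set.uIcc_subset_uIcc (huIcc ▸ hs) (huIcc ▸ ht)
  have hWCcont : ContinuousOn (fun τ => W τ * Cc τ) (Set.Icc 0 T) := hW.mul hCcont
  have hAcont : ContinuousOn (fun t => ∫ τ in (0:ℝ)..t, W τ) (Set.Icc 0 T) := by
    have := intervalIntegral.continuousOn_primitive_interval
      (μ := volume) (f := W) (a := 0) (b := T) (by rw [huIcc]; exact hW.integrableOn_Icc)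
    rwa [huIcc] at this
  have hA0 : (∫ τ in (0:ℝ)..(0:ℝ), W τ) = 0 := intervalIntegral.integral_same
  have hAderiv : ∀ t ∈ Set.Ioo (0:ℝ) T,
      HasDerivAt (fun u => ∫ τ in (0:ℝ)..u, W τ) (W t) t := by
    intro t ht
    exact intervalIntegral.integral_hasDerivAt_right
      (hsubint W hW 0 ⟨le_rfl, hT.le⟩ t (Set.Ioo_subset_Icc_self ht))
      (ContinuousOn.stronglyMeasurableAtFilter isOpen_Ioo (hW.mono Set.Ioo_subset_Icc_self) t ht)
      (hW.continuousAt (Icc_mem_nhds ht.1 ht.2))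
  have hCform : ∀ t ∈ Set.Icc (0:ℝ) T,
      Cc t = C0 * Real.exp (-(∫ τ in (0:ℝ)..t, W τ)) := by
    have hhcont : ContinuousOn (fun t => Cc t * Real.exp (∫ τ in (0:ℝ)..t, W τ))
        (Set.Icc 0 T) := hCcont.mul (Real.continuous_exp.comp_continuousOn hAcont)
    have hderiv0 : ∀ t ∈ Set.Ioo (0:ℝ) T,
        HasDerivWithinAt (fun t => Cc t * Real.exp (∫ τ in (0:ℝ)..t, W τ)) 0 (Set.Ici t) t := by
      intro t ht
      have h1 := hode t ⟨ht.1, ht.2.le⟩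
      have h2 := (hAderiv t ht).exp
      have h3 := h1.mul h2
      have hval : (-(W t * Cc t)) * Real.exp (∫ τ in (0:ℝ)..t, W τ)
          + Cc t * (Real.exp (∫ τ in (0:ℝ)..t, W τ) * W t) = 0 := by ring
      rw [hval] at h3
      exact h3.hasDerivWithinAt
    have hconstT : ∀ t ∈ Set.Ioc (0:ℝ) T,
        Cc t * Real.exp (∫ τ in (0:ℝ)..t, W τ)
          = Cc T * Real.exp (∫ τ in (0:ℝ)..T, W τ) := by
      intro t ht
      have := constant_of_has_deriv_right_zero (a := t) (b := T)
        (hhcont.mono (Set.Icc_subset_Icc ht.1.le le_rfl))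
        (fun y hy => hderiv0 y ⟨lt_of_lt_of_le ht.1 hy.1, hy.2⟩)
      exact (this T ⟨ht.2, le_rfl⟩).symm
    have hne : (𝓝[Set.Ioc (0:ℝ) T] 0).NeBot := by
      rw [← mem_closure_iff_nhdsWithin_neBot, closure_Ioc hT.ne]
      exact ⟨le_rfl, hT.le⟩
    have h0T : Cc T * Real.exp (∫ τ in (0:ℝ)..T, W τ) = C0 := by
      have l1 : Filter.Tendsto (fun t => Cc t * Real.exp (∫ τ in (0:ℝ)..t, W τ))
          (𝓝[Set.Ioc (0:ℝ) T] 0) (𝓝 (Cc 0 * Real.exp (∫ τ in (0:ℝ)..(0:ℝ), W τ))) :=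
        ((hhcont 0 ⟨le_rfl, hT.le⟩).mono Set.Ioc_subset_Icc_self).tendsto
      have l2 : Filter.Tendsto (fun t => Cc t * Real.exp (∫ τ in (0:ℝ)..t, W τ))
          (𝓝[Set.Ioc (0:ℝ) T] 0) (𝓝 (Cc T * Real.exp (∫ τ in (0:ℝ)..T, W τ))) := by
        apply Filter.Tendsto.congr' ?_ tendsto_const_nhds
        filter_upwards [self_mem_nhdsWithin] with x hx
        exact (hconstT x hx).symm
      have := tendsto_nhds_unique l1 l2
      rw [← this, hCc0, hA0, Real.exp_zero, mul_one]
    intro t ht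
    have hht : Cc t * Real.exp (∫ τ in (0:ℝ)..t, W τ) = C0 := by
      rcases eq_or_lt_of_le ht.1 with h0 | h0
      · rw [← h0, hCc0, hA0, Real.exp_zero, mul_one]
      · rw [hconstT t ⟨h0, ht.2⟩, h0T]
    have hexp : Real.exp (∫ τ in (0:ℝ)..t, W τ) ≠ 0 := (Real.exp_pos _).ne'
    rw [Real.exp_neg, ← div_eq_mul_inv, eq_div_iff hexp]
    exact hht
  have hBform : ∀ t ∈ Set.Icc (0:ℝ) T,
      (∫ τ in (0:ℝ)..t, W τ * Cc τ)
        = C0 * (1 - Real.exp (-(∫ τ in (0:ℝ)..t, W τ))) := by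
    intro t ht
    have hint : IntervalIntegrable (fun τ => W τ * Cc τ) volume 0 t :=
      hsubint _ hWCcont 0 ⟨le_rfl, hT.le⟩ t ht
    have hsub : Set.Icc (0:ℝ) t ⊆ Set.Icc 0 T := Set.Icc_subset_Icc le_rfl ht.2
    have hFc : ContinuousOn (fun u => C0 * (1 - Real.exp (-(∫ τ in (0:ℝ)..u, W τ))))
        (Set.Icc 0 t) := by
      apply ContinuousOn.mul continuousOn_const
      apply ContinuousOn.sub continuousOn_const
      exact Real.continuous_exp.comp_continuousOn (hAcont.mono hsub).neg
    have hder : ∀ x ∈ Set.Ioo (0:ℝ) t,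
        HasDerivWithinAt (fun u => C0 * (1 - Real.exp (-(∫ τ in (0:ℝ)..u, W τ))))
          (W x * Cc x) (Set.Ioi x) x := by
      intro x hx
      have hx' : x ∈ Set.Ioo (0:ℝ) T := ⟨hx.1, lt_of_lt_of_le hx.2 ht.2⟩
      have hd := (((hAderiv x hx').neg.exp).const_sub 1).const_mul C0
      have hval : C0 * -(Real.exp (-(∫ τ in (0:ℝ)..x, W τ)) * -W x) = W x * Cc x := by
        rw [hCform x (Set.Ioo_subset_Icc_self hx')]
        ring
      simp only [Pi.neg_apply] at hd
      rw [hval] at hd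
      exact hd.hasDerivWithinAt
    have := intervalIntegral.integral_eq_sub_of_hasDeriv_right_of_le ht.1 hFc hder hint
    rw [this, hA0]
    simp
  have hsplit : ∀ t ∈ Set.Icc (0:ℝ) T,
      (∫ τ in (0:ℝ)..t, W τ * (Cc τ + 1))
        = (∫ τ in (0:ℝ)..t, W τ * Cc τ) + (∫ τ in (0:ℝ)..t, W τ) := by
    intro t ht
    have h1 : IntervalIntegrable (fun τ => W τ * Cc τ) volume 0 t :=
      hsubint _ hWCcont 0 ⟨le_rfl, hT.le⟩ t ht
    have h2 : IntervalIntegrable W volume 0 t := hsubint W hW 0 ⟨le_rfl, hT.le⟩ t ht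
    rw [← intervalIntegral.integral_add h1 h2]
    apply intervalIntegral.integral_congr
    intro x _
    ring
  obtain ⟨t₀, ht₀, hW0⟩ := hpos
  obtain ⟨η, hη, hgne⟩ := gfun17_isolated C0 lam hC0 hlam (∫ τ in (0:ℝ)..t₀, W τ)
  have hev : ∀ᶠ z in 𝓝[Set.Icc (0:ℝ) T] t₀,
      0 < W z ∧ |(∫ τ in (0:ℝ)..z, W τ) - (∫ τ in (0:ℝ)..t₀, W τ)| < η := by
    have e1 : ∀ᶠ z in 𝓝[Set.Icc (0:ℝ) T] t₀, 0 < W z :=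
      (hW t₀ ht₀).eventually (eventually_gt_nhds hW0)
    have hp : ∀ᶠ y in 𝓝 (∫ τ in (0:ℝ)..t₀, W τ),
        |y - (∫ τ in (0:ℝ)..t₀, W τ)| < η :=
      Metric.eventually_nhds_iff.mpr
        ⟨η, hη, fun y hy => by simpa [Real.dist_eq] using hy⟩
    have e2 := (hAcont t₀ ht₀).eventually hp
    filter_upwards [e1, e2] with z h1 h2
    exact ⟨h1, h2⟩
  rw [eventually_nhdsWithin_iff, Metric.eventually_nhds_iff] at hev
  obtain ⟨δ, hδ, hball⟩ := hev
  have conclude : ∀ t₁ ∈ Set.Icc (0:ℝ) T, 0 < W t₁ →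
      (∫ τ in (0:ℝ)..t₁, W τ) ≠ (∫ τ in (0:ℝ)..t₀, W τ) →
      |(∫ τ in (0:ℝ)..t₁, W τ) - (∫ τ in (0:ℝ)..t₀, W τ)| < η →
      ∃ t₁ ∈ Set.Icc (0:ℝ) T,
        (C0 * Real.exp (-(∫ τ in (0:ℝ)..t₁, W τ)) *
            (1 - Real.exp (-(∫ τ in (0:ℝ)..t₁, W τ * Cc τ)))
          - lam * (1 - Real.exp (-(∫ τ in (0:ℝ)..t₁, W τ * (Cc τ + 1)))) ≠ 0) ∧ 0 < W t₁ := by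
    intro t₁ h1mem hWpos1 hne hnear
    refine ⟨t₁, h1mem, ?_, hWpos1⟩
    rw [hsplit t₁ h1mem, hBform t₁ h1mem]
    have := hgne (∫ τ in (0:ℝ)..t₁, W τ) hnear hne
    rw [add_comm] at this
    exact this
  rcases lt_or_eq_of_le ht₀.2 with hlt | heq
  · set t₁ := min (t₀ + δ/2) ((t₀ + T)/2) with ht₁def
    have h01 : t₀ < t₁ := lt_min (by linarith) (by linarith)
    have h1T : t₁ ≤ T := le_trans (min_le_right _ _) (by linarith)
    have h1mem : t₁ ∈ Set.Icc (0:ℝ) T := ⟨le_trans ht₀.1 h01.le, h1T⟩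
    have hd1 : ∀ x, t₀ ≤ x → x ≤ t₁ → dist x t₀ < δ := by
      intro x hx1 hx2
      rw [Real.dist_eq, abs_of_nonneg (by linarith)]
      have : t₁ ≤ t₀ + δ/2 := min_le_left _ _
      linarith
    obtain ⟨hWpos1, hA1near⟩ := hball (hd1 t₁ h01.le le_rfl) h1mem
    have hApos : (∫ τ in (0:ℝ)..t₀, W τ) < (∫ τ in (0:ℝ)..t₁, W τ) := by
      have heq2 : (∫ τ in (0:ℝ)..t₁, W τ) - (∫ τ in (0:ℝ)..t₀, W τ)
          = ∫ τ in t₀..t₁, W τ :=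
        intervalIntegral.integral_interval_sub_left
          (hsubint W hW 0 ⟨le_rfl, hT.le⟩ t₁ h1mem)
          (hsubint W hW 0 ⟨le_rfl, hT.le⟩ t₀ ht₀)
      have hpos' : 0 < ∫ τ in t₀..t₁, W τ := by
        apply intervalIntegral.intervalIntegral_pos_of_pos_on
          (hsubint W hW t₀ ht₀ t₁ h1mem) _ h01
        intro x hx
        have hxmem : x ∈ Set.Icc (0:ℝ) T :=
          ⟨le_trans ht₀.1 hx.1.le, le_trans hx.2.le h1T⟩
        exact (hball (hd1 x hx.1.le hx.2.le) hxmem).1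
      linarith
    exact conclude t₁ h1mem hWpos1 (ne_of_gt hApos) hA1near
  · subst heq
    set t₁ := max (t₀ - δ/2) (t₀/2) with ht₁def
    have hT0 : 0 < t₀ := hT
    have h01 : t₁ < t₀ := max_lt (by linarith) (by linarith)
    have h10 : 0 ≤ t₁ := le_trans (by linarith) (le_max_right _ _)
    have h1mem : t₁ ∈ Set.Icc (0:ℝ) t₀ := ⟨h10, h01.le⟩
    have hd1 : ∀ x, t₁ ≤ x → x ≤ t₀ → dist x t₀ < δ := by
      intro x hx1 hx2
      rw [Real.dist_eq, abs_of_nonpos (by linarith)]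
      have : t₀ - δ/2 ≤ t₁ := le_max_left _ _
      linarith
    obtain ⟨hWpos1, hA1near⟩ := hball (hd1 t₁ le_rfl h01.le) h1mem
    have hApos : (∫ τ in (0:ℝ)..t₁, W τ) < (∫ τ in (0:ℝ)..t₀, W τ) := by
      have heq2 : (∫ τ in (0:ℝ)..t₀, W τ) - (∫ τ in (0:ℝ)..t₁, W τ)
          = ∫ τ in t₁..t₀, W τ :=
        intervalIntegral.integral_interval_sub_left
          (hsubint W hW 0 ⟨le_rfl, hT.le⟩ t₀ ht₀)
          (hsubint W hW 0 ⟨le_rfl, hT.le⟩ t₁ h1mem)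
      have hpos' : 0 < ∫ τ in t₁..t₀, W τ := by
        apply intervalIntegral.intervalIntegral_pos_of_pos_on
          (hsubint W hW t₁ h1mem t₀ ht₀) _ h01
        intro x hx
        have hxmem : x ∈ Set.Icc (0:ℝ) t₀ := ⟨le_trans h10 hx.1.le, hx.2.le⟩
        exact (hball (hd1 x hx.1.le hx.2.le) hxmem).1
      linarith
    exact conclude t₁ h1mem hWpos1 (ne_of_lt hApos) hA1near


open Filter Topology

theorem stmt17 (a b T lam κ : ℝ) (n : ℕ) (ha : 0 < a) (hab : a < b) (hn : 1 ≤ n)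
    (hT : 0 < T) (hlam : 0 < lam) (hκ : 0 ≤ κ)
    (w₀ c₀ : ℝ → ℝ) (hdata : InitData a b lam κ 2 3 w₀ c₀)
    (w0 c0 : ℝ → ℝ → ℝ)
    (hsol0 : IsClassicalSolution a b T n lam κ 0 w₀ c₀ w0 c0) :
    ((∃ t ∈ Set.Icc (0:ℝ) T, 0 < w0 a t) →
      ∃ t₁ ∈ Set.Icc (0:ℝ) T, Efun lam c₀ a w0 c0 t₁ ≠ 0 ∧ 0 < w0 a t₁)
    ∧ ((∃ t ∈ Set.Icc (0:ℝ) T, 0 < w0 b t) →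
      ∃ t₂ ∈ Set.Icc (0:ℝ) T, Efun lam c₀ b w0 c0 t₂ ≠ 0 ∧ 0 < w0 b t₂) := by
  have key : ∀ x, x ∈ Set.Icc a b → (𝓝[Set.Ioo a b] x).NeBot →
      (∃ t ∈ Set.Icc (0:ℝ) T, 0 < w0 x t) →
      ∃ t₁ ∈ Set.Icc (0:ℝ) T, Efun lam c₀ x w0 c0 t₁ ≠ 0 ∧ 0 < w0 x t₁ := by
    intro x hx hnb hex
    have hWc : ContinuousOn (fun t => w0 x t) (Set.Icc 0 T) :=
      hsol0.cont_w.comp ((continuous_const.prodMk continuous_id).continuousOn)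
        (fun t ht => Set.mem_prod.mpr ⟨hx, ht⟩)
    have hCc : ContinuousOn (fun t => c0 x t) (Set.Icc 0 T) :=
      hsol0.cont_c.comp ((continuous_const.prodMk continuous_id).continuousOn)
        (fun t ht => Set.mem_prod.mpr ⟨hx, ht⟩)
    have hC0pos : 0 < c₀ x := hdata.c0_pos x hx
    have hc00 : c0 x 0 = c₀ x := hsol0.init_c x hx
    have hode : ∀ t ∈ Set.Ioc (0:ℝ) T,
        HasDerivAt (fun s => c0 x s) (-(w0 x t * c0 x t)) t := by
      intro t ht
      have hdval : dt c0 x t = -(w0 x t * c0 x t) := by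
        have h1 : Filter.Tendsto (fun r => dt c0 r t) (𝓝[Set.Ioo a b] x) (𝓝 (dt c0 x t)) :=
          (((hsol0.smooth_ct_space t ht).continuousOn x hx).mono
            Set.Ioo_subset_Icc_self).tendsto
        have h2 : Filter.Tendsto (fun r => -(w0 r t * c0 r t)) (𝓝[Set.Ioo a b] x)
            (𝓝 (-(w0 x t * c0 x t))) :=
          (((((hsol0.smooth_w_space t ht).continuousOn.mul
            (hsol0.smooth_c_space t ht).continuousOn).neg) x hx).mono
            Set.Ioo_subset_Icc_self).tendsto
        have heqn : Set.EqOn (fun r => dt c0 r t) (fun r => -(w0 r t * c0 r t))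
            (Set.Ioo a b) := by
          intro r hr
          have := hsol0.eq_c r hr t ht
          simpa using this
        have h1' : Filter.Tendsto (fun r => dt c0 r t) (𝓝[Set.Ioo a b] x)
            (𝓝 (-(w0 x t * c0 x t))) := by
          apply Filter.Tendsto.congr' ?_ h2
          filter_upwards [self_mem_nhdsWithin] with r hr
          exact (heqn hr).symm
        exact tendsto_nhds_unique h1 h1'
      have := (hsol0.diff_c_time x hx t ht).hasDerivAt
      rwa [show deriv (fun s => c0 x s) t = dt c0 x t from rfl, hdval] at this
    obtain ⟨t₁, h1, h2, h3⟩ := boundary_main17 T lam (c₀ x) hT hlam hC0pos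
      (fun t => w0 x t) (fun t => c0 x t) hWc hCc hc00 hode hex
    exact ⟨t₁, h1, by simpa [Efun] using h2, h3⟩
  have na : (𝓝[Set.Ioo a b] a).NeBot := by
    rw [← mem_closure_iff_nhdsWithin_neBot, closure_Ioo hab.ne]
    exact ⟨le_rfl, hab.le⟩
  have nb : (𝓝[Set.Ioo a b] b).NeBot := by
    rw [← mem_closure_iff_nhdsWithin_neBot, closure_Ioo hab.ne]
    exact ⟨hab.le, le_rfl⟩
  exact ⟨key a ⟨le_rfl, hab.le⟩ na, key b ⟨hab.le, le_rfl⟩ nb⟩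

end
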